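/- Let (S, T) be a neutral dual pair in a Krein space (H, J), i.e., S and T are closed J-neutral subspaces with H = S ∔ T^{[⊥]} (direct sum). Then for any orthonormal basis {sₙ} of S (in the Hilbert space sense) there exists a Riesz basis {tₙ} of T such that [sᵢ, tⱼ] = δᵢⱼ for all i, j, where [f,g] = ⟨Jf, g⟩. -/

import Mathlib

open ContinuousLinearMap

open scoped InnerProductSpace

set_option maxHeartbeats 2000000
set_option synthInstance.maxHeartbeats 1000000

variable {H : Type*} [NormedAddCommGroup H] [InnerProductSpace ℂ H] [CompleteSpace H]

/-- The `J`-adjoint `T^# = J T* J`. -/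
noncomputable def sharp (J T : H →L[ℂ] H) : H →L[ℂ] H :=
  J ∘L (ContinuousLinearMap.adjoint T) ∘L J

/-- The `J`-orthogonal companion `S^{[⊥]} = {f : [g,f] = 0 ∀ g ∈ S}` where `[g,f] = ⟪J g, f⟫`. -/
def jperp (J : H →L[ℂ] H) (S : Submodule ℂ H) : Submodule ℂ H where
  carrier := {f | ∀ g ∈ S, (inner ℂ (J g) f : ℂ) = 0}
  add_mem' := by
    intro a b ha hb g hg
    rw [inner_add_right, ha g hg, hb g hg, add_zero]
  zero_mem' := by
    intro g hg
    simp
  smul_mem' := by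
    intro c a ha g hg
    rw [inner_smul_right, ha g hg, mul_zero]

/-- `t` is a Riesz basis of `T`: the image of an orthonormal (Hilbert) basis of `T` under a
bounded invertible operator. -/
def IsRieszBasis {ι : Type*} (T : Submodule ℂ H) (t : ι → T) : Prop :=
  ∃ (e : HilbertBasis ι ℂ T) (V : T ≃L[ℂ] T), ∀ i, t i = V (e i)

/-- Polar decomposition of a continuous linear equivalence between complex Hilbert spaces:
it factors as a linear isometric equivalence followed by a continuous linear automorphism. -/
theorem polar_decomp_aux {E F : Type*} [NormedAddCommGroup E] [InnerProductSpace ℂ E]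
    [CompleteSpace E] [NormedAddCommGroup F] [InnerProductSpace ℂ F] [CompleteSpace F]
    (U : E ≃L[ℂ] F) : ∃ (W : E ≃ₗᵢ[ℂ] F) (V : F ≃L[ℂ] F), ∀ x, U x = V (W x) := by
  set Uc : E →L[ℂ] F := (U : E →L[ℂ] F) with hUcdef
  set a : E →L[ℂ] E := (ContinuousLinearMap.adjoint Uc) ∘L Uc with hadef
  have ha_pos : (0 : E →L[ℂ] E) ≤ a := by
    rw [ContinuousLinearMap.nonneg_iff_isPositive]
    constructor
    · rw [← ContinuousLinearMap.isSelfAdjoint_iff_isSymmetric, ContinuousLinearMap.isSelfAdjoint_iff', hadef, ContinuousLinearMap.adjoint_comp,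
        ContinuousLinearMap.adjoint_adjoint]
    · intro x
      rw [ContinuousLinearMap.reApplyInnerSelf_apply, hadef]
      have : ⟪((ContinuousLinearMap.adjoint Uc) ∘L Uc) x, x⟫_ℂ = ⟪Uc x, Uc x⟫_ℂ := by
        rw [ContinuousLinearMap.comp_apply, ContinuousLinearMap.adjoint_inner_left]
      rw [this]
      exact inner_self_nonneg
  set R : E →L[ℂ] E := CFC.sqrt a with hRdef
  have hR2 : R * R = a := CFC.sqrt_mul_sqrt_self a ha_pos
  have hRsa : ContinuousLinearMap.adjoint R = R := by
    have hsa : IsSelfAdjoint R := by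
      rw [hRdef]
      exact IsSelfAdjoint.of_nonneg (CFC.sqrt_nonneg a)
    rw [← ContinuousLinearMap.star_eq_adjoint]
    exact hsa
  set Usi : F →L[ℂ] E := (U.symm : F →L[ℂ] E) with hUsidef
  have hUUinv : Uc ∘L Usi = ContinuousLinearMap.id ℂ F := by
    ext x; simp [hUcdef, hUsidef]
  have hUinvU : Usi ∘L Uc = ContinuousLinearMap.id ℂ E := by
    ext x; simp [hUcdef, hUsidef]
  set ainv : E →L[ℂ] E := Usi ∘L (ContinuousLinearMap.adjoint Usi) with hainvdef
  have ha_r : a * ainv = 1 := by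
    calc a * ainv
        = (ContinuousLinearMap.adjoint Uc) ∘L
            ((Uc ∘L Usi) ∘L (ContinuousLinearMap.adjoint Usi)) := by
          rw [ContinuousLinearMap.mul_def, hadef, hainvdef]
          simp only [ContinuousLinearMap.comp_assoc]
      _ = (ContinuousLinearMap.adjoint Uc) ∘L (ContinuousLinearMap.adjoint Usi) := by
          rw [hUUinv, ContinuousLinearMap.id_comp]
      _ = ContinuousLinearMap.adjoint (Usi ∘L Uc) := (ContinuousLinearMap.adjoint_comp _ _).symm
      _ = 1 := by
          rw [hUinvU, ContinuousLinearMap.adjoint_id, ContinuousLinearMap.one_def]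
  have ha_l : ainv * a = 1 := by
    calc ainv * a
        = Usi ∘L (((ContinuousLinearMap.adjoint Usi) ∘L (ContinuousLinearMap.adjoint Uc)) ∘L Uc) := by
          rw [ContinuousLinearMap.mul_def, hadef, hainvdef]
          simp only [ContinuousLinearMap.comp_assoc]
      _ = Usi ∘L ((ContinuousLinearMap.adjoint (Uc ∘L Usi)) ∘L Uc) := by
          rw [ContinuousLinearMap.adjoint_comp]
      _ = 1 := by
          rw [hUUinv, ContinuousLinearMap.adjoint_id, ContinuousLinearMap.id_comp, hUinvU,
            ContinuousLinearMap.one_def]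
  set Rinv : E →L[ℂ] E := R * ainv with hRinvdef
  have hRr : R * Rinv = 1 := by
    rw [hRinvdef, ← mul_assoc, hR2, ha_r]
  have hRl : Rinv * R = 1 := by
    have h1 : (ainv * R) * R = 1 := by rw [mul_assoc, hR2, ha_l]
    have h2 : ainv * R = Rinv := by
      calc ainv * R = (ainv * R) * (R * Rinv) := by rw [hRr, mul_one]
        _ = ((ainv * R) * R) * Rinv := (mul_assoc _ _ _).symm
        _ = Rinv := by rw [h1, one_mul]
    rw [← h2, h1]
  set Req : E ≃L[ℂ] E := ContinuousLinearEquiv.equivOfInverse R Rinv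
    (fun x => by
      have := ContinuousLinearMap.ext_iff.1 hRl x
      simpa [ContinuousLinearMap.mul_apply] using this)
    (fun x => by
      have := ContinuousLinearMap.ext_iff.1 hRr x
      simpa [ContinuousLinearMap.mul_apply] using this) with hReqdef
  have hReqapp : ∀ x : E, Req x = R x := fun x => rfl
  have hnorm : ∀ x : E, ‖(Req.symm.trans U) x‖ = ‖x‖ := by
    intro x
    have h1 : ∀ y : E, ⟪Uc y, Uc y⟫_ℂ = ⟪R y, R y⟫_ℂ := by
      intro y
      have e1 : ⟪a y, y⟫_ℂ = ⟪Uc y, Uc y⟫_ℂ := by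
        rw [hadef, ContinuousLinearMap.comp_apply, ContinuousLinearMap.adjoint_inner_left]
      have e2 : ⟪a y, y⟫_ℂ = ⟪R y, R y⟫_ℂ := by
        conv_lhs => rw [← hR2, ContinuousLinearMap.mul_apply, ← hRsa]
        rw [ContinuousLinearMap.adjoint_inner_left, hRsa]
      rw [← e1, e2]
    have h2 : R (Req.symm x) = x := by
      rw [← hReqapp]
      exact Req.apply_symm_apply x
    have h3 : ⟪Uc (Req.symm x), Uc (Req.symm x)⟫_ℂ = ⟪x, x⟫_ℂ := by
      rw [h1, h2]
    have h5 : ‖Uc (Req.symm x)‖ ^ 2 = ‖x‖ ^ 2 := by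
      have h4 := congrArg (RCLike.re (K := ℂ)) h3
      rwa [inner_self_eq_norm_sq, inner_self_eq_norm_sq] at h4
    have h6 : ‖Uc (Req.symm x)‖ = ‖x‖ := by
      have := congrArg Real.sqrt h5
      simpa [Real.sqrt_sq, norm_nonneg] using this
    simpa [ContinuousLinearEquiv.trans_apply, hUcdef] using h6
  refine ⟨⟨(Req.symm.trans U).toLinearEquiv, hnorm⟩,
    (LinearIsometryEquiv.mk (Req.symm.trans U).toLinearEquiv hnorm).symm.toContinuousLinearEquiv.trans U,
    ?_⟩
  intro x
  simp only [ContinuousLinearEquiv.trans_apply, LinearIsometryEquiv.coe_toContinuousLinearEquiv]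
  rw [LinearIsometryEquiv.symm_apply_apply]

/-- Given a neutral dual pair `(S,T)` and an orthonormal basis `{sₙ}` of `S`, there is a Riesz
basis `{tₙ}` of `T` that is `J`-biorthogonal to it. -/
theorem stmt5 {ι : Type*} [DecidableEq ι] (J : H →L[ℂ] H)
    (hJsa : ContinuousLinearMap.adjoint J = J) (hJ2 : J ∘L J = 1)
    (S T : Submodule ℂ H) [CompleteSpace S] [CompleteSpace T]
    (hSc : IsClosed (S : Set H)) (hTc : IsClosed (T : Set H))
    (hSneu : ∀ f ∈ S, (inner ℂ (J f) f : ℂ) = 0)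
    (hTneu : ∀ f ∈ T, (inner ℂ (J f) f : ℂ) = 0)
    (hsum : ∀ x : H, ∃ a ∈ S, ∃ b ∈ jperp J T, x = a + b)
    (hdis : S ⊓ jperp J T = ⊥)
    (s : HilbertBasis ι ℂ S) :
    ∃ t : ι → T, IsRieszBasis T t ∧
      ∀ i j, (inner ℂ (J ((s i : S) : H)) ((t j : H)) : ℂ) = if i = j then 1 else 0 := by
  classical
  -- basic facts about J
  have hJJ : ∀ x : H, J (J x) = x := fun x => by
    have := ContinuousLinearMap.ext_iff.1 hJ2 x
    simpa using this
  have hJsym : ∀ x y : H, ⟪J x, y⟫_ℂ = ⟪x, J y⟫_ℂ := fun x y => by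
    conv_lhs => rw [← hJsa]
    exact ContinuousLinearMap.adjoint_inner_left J y x
  -- the subspace M = J T
  set M : Submodule ℂ H := T.map (J : H →ₗ[ℂ] H) with hMdef
  have hMmem : ∀ x : H, x ∈ M ↔ ∃ g ∈ T, J g = x := fun x => by
    simp [hMdef, Submodule.mem_map]
  have hMclosed : IsClosed (M : Set H) := by
    have himg : (M : Set H) =
        (ContinuousLinearEquiv.equivOfInverse J J hJJ hJJ).toHomeomorph '' (T : Set H) := by
      ext x
      simp only [Set.mem_image, SetLike.mem_coe]
      constructor
      · intro hx
        rcases (hMmem x).1 hx with ⟨g, hg, rfl⟩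
        exact ⟨g, hg, rfl⟩
      · rintro ⟨g, hg, rfl⟩
        exact (hMmem _).2 ⟨g, hg, rfl⟩
    rw [himg]
    exact (Homeomorph.isClosed_image _).2 hTc
  haveI : CompleteSpace M := hMclosed.completeSpace_coe
  -- N = Mᗮ = T^{[⊥]}
  set N : Submodule ℂ H := Mᗮ with hNdef
  have hjperpN : jperp J T = N := by
    ext f
    constructor
    · intro hf
      rw [hNdef, Submodule.mem_orthogonal]
      intro u hu
      rcases (hMmem u).1 hu with ⟨g, hg, rfl⟩
      exact hf g hg
    · intro hf g hg
      exact (Submodule.mem_orthogonal _ _).1 hf (J g) ((hMmem _).2 ⟨g, hg, rfl⟩)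
  have hNN : Nᗮ = M := Submodule.orthogonal_orthogonal M
  -- the continuous linear equiv S × N ≃ H
  set Φ : (S × N) →L[ℂ] H := S.subtypeL.coprod N.subtypeL with hΦdef
  have hker : LinearMap.ker (Φ : (S × N) →ₗ[ℂ] H) = ⊥ := by
    rw [LinearMap.ker_eq_bot']
    rintro ⟨a, b⟩ hab
    have hab' : (a : H) + (b : H) = 0 := hab
    have haN : (a : H) ∈ N := by
      have hneg : (a : H) = -(b : H) := eq_neg_of_add_eq_zero_left hab'
      rw [hneg]
      exact N.neg_mem b.2
    have hmem : (a : H) ∈ S ⊓ jperp J T := ⟨a.2, hjperpN ▸ haN⟩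
    have ha0 : (a : H) = 0 := by
      rw [hdis] at hmem
      simpa using hmem
    have hb0 : (b : H) = 0 := by
      rw [ha0, zero_add] at hab'
      exact hab'
    ext <;> simp [ha0, hb0]
  have hrange : LinearMap.range (Φ : (S × N) →ₗ[ℂ] H) = ⊤ := by
    rw [LinearMap.range_eq_top]
    intro x
    rcases hsum x with ⟨a, ha, b, hb, rfl⟩
    exact ⟨(⟨a, ha⟩, ⟨b, hjperpN ▸ hb⟩), rfl⟩
  set Φe : (S × N) ≃L[ℂ] H := ContinuousLinearEquiv.ofBijective Φ hker hrange with hΦedef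
  have hΦeapp : ∀ p : S × N, Φe p = (p.1 : H) + (p.2 : H) := fun p => rfl
  -- the projection P onto S along N
  set P : H →L[ℂ] H :=
    S.subtypeL ∘L (ContinuousLinearMap.fst ℂ S N) ∘L (Φe.symm : H →L[ℂ] (S × N)) with hPdef
  have hPapp : ∀ x : H, P x = ((Φe.symm x).1 : H) := fun x => rfl
  have hPS : ∀ x : H, P x ∈ S := fun x => by rw [hPapp]; exact ((Φe.symm x).1).2
  have hPsub : ∀ x : H, x - P x ∈ N := by
    intro x
    have hx : ((Φe.symm x).1 : H) + ((Φe.symm x).2 : H) = x := by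
      rw [← hΦeapp]
      exact Φe.apply_symm_apply x
    have hsub : x - P x = ((Φe.symm x).2 : H) := by
      rw [hPapp]
      exact sub_eq_of_eq_add' hx.symm
    rw [hsub]
    exact ((Φe.symm x).2).2
  have hPa : ∀ a : H, a ∈ S → P a = a := by
    intro a ha
    have h1 : Φe ((⟨a, ha⟩ : S), (0 : N)) = a := by
      rw [hΦeapp]; simp
    have h2 : Φe.symm a = ((⟨a, ha⟩ : S), (0 : N)) := by
      have h3 := congrArg Φe.symm h1
      rw [Φe.symm_apply_apply] at h3
      exact h3.symm
    rw [hPapp, h2]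
  have hPb : ∀ b : H, b ∈ N → P b = 0 := by
    intro b hb
    have h1 : Φe ((0 : S), (⟨b, hb⟩ : N)) = b := by
      rw [hΦeapp]; simp
    have h2 : Φe.symm b = ((0 : S), (⟨b, hb⟩ : N)) := by
      have h3 := congrArg Φe.symm h1
      rw [Φe.symm_apply_apply] at h3
      exact h3.symm
    rw [hPapp, h2]
    simp
  -- the adjoint of P
  set Q : H →L[ℂ] H := ContinuousLinearMap.adjoint P with hQdef
  have hQinner : ∀ x y : H, ⟪x, Q y⟫_ℂ = ⟪P x, y⟫_ℂ := fun x y =>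
    ContinuousLinearMap.adjoint_inner_right P x y
  have hQinner' : ∀ x y : H, ⟪Q y, x⟫_ℂ = ⟪y, P x⟫_ℂ := fun x y =>
    ContinuousLinearMap.adjoint_inner_left P x y
  have hQM : ∀ u : H, Q u ∈ M := by
    intro u
    rw [← hNN, Submodule.mem_orthogonal]
    intro b hb
    rw [hQinner, hPb b hb, inner_zero_left]
  have hJQT : ∀ u : H, J (Q u) ∈ T := by
    intro u
    rcases (hMmem _).1 (hQM u) with ⟨g, hg, hgq⟩
    rw [← hgq, hJJ]
    exact hg
  -- the maps C and B
  set C : S →L[ℂ] T :=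
    ContinuousLinearMap.codRestrict ((J ∘L Q) ∘L S.subtypeL) T (fun u => hJQT u) with hCdef
  have hCapp : ∀ u : S, (C u : H) = J (Q u) := fun u => rfl
  set B : T →L[ℂ] S := (S.orthogonalProjectionOnto) ∘L (J ∘L T.subtypeL) with hBdef
  have hBapp : ∀ t : T, B t = S.orthogonalProjectionOnto (J t) := fun t => rfl
  have hBC : ∀ u : S, B (C u) = u := by
    intro u
    apply Subtype.ext
    rw [hBapp, hCapp, hJJ]
    refine Submodule.eq_starProjection_of_mem_orthogonal u.2 ?_
    rw [Submodule.mem_orthogonal']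
    intro g hg
    rw [inner_sub_left, hQinner', hPa g hg, sub_self]
  have hCB : ∀ t : T, C (B t) = t := by
    intro t
    apply Subtype.ext
    rw [hCapp, hBapp]
    have hQt : Q (S.orthogonalProjectionOnto (J t)) = J t := by
      apply ext_inner_left ℂ
      intro x
      rw [hQinner]
      have h1 : ⟪P x, ((S.orthogonalProjectionOnto (J (t : H))) : H)⟫_ℂ = ⟪P x, J (t : H)⟫_ℂ := by
        have h0 := (Submodule.mem_orthogonal _ _).1
          (Submodule.sub_starProjection_mem_orthogonal (K := S) (J (t : H))) (P x) (hPS x)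
        rw [inner_sub_right, sub_eq_zero] at h0
        exact h0.symm
      have h2 : ⟪x - P x, J (t : H)⟫_ℂ = 0 := by
        have hmem : x - P x ∈ N := hPsub x
        rw [hNdef, Submodule.mem_orthogonal'] at hmem
        exact hmem (J t) ((hMmem _).2 ⟨t, t.2, rfl⟩)
      calc ⟪P x, ((S.orthogonalProjectionOnto (J (t : H))) : H)⟫_ℂ
          = ⟪P x, J (t : H)⟫_ℂ := h1
        _ = ⟪P x, J (t : H)⟫_ℂ + ⟪x - P x, J (t : H)⟫_ℂ := by rw [h2, add_zero]
        _ = ⟪x, J (t : H)⟫_ℂ := by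
            rw [← inner_add_left]
            congr 1
            abel
    rw [hQt, hJJ]
  -- the equivalence S ≃L T
  set Uceq : S ≃L[ℂ] T := ContinuousLinearEquiv.equivOfInverse C B hBC hCB with hUdef
  -- polar decomposition
  obtain ⟨W, V, hWV⟩ := polar_decomp_aux Uceq
  -- the Hilbert basis e of T
  set e : HilbertBasis ι ℂ T := HilbertBasis.ofRepr (W.symm.trans s.repr) with hedef
  have heapp : ∀ i, e i = W (s i) := by
    intro i
    rw [← e.repr_symm_single i]
    have hrepr : e.repr.symm = s.repr.symm.trans W := rfl
    rw [hrepr, LinearIsometryEquiv.trans_apply, s.repr_symm_single]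
  -- conclusion
  refine ⟨fun j => Uceq (s j), ⟨e, V, ?_⟩, ?_⟩
  · intro i
    rw [heapp, ← hWV]
  · intro i j
    have hco : ((Uceq (s j) : T) : H) = J (Q ((s j : S) : H)) := hCapp (s j)
    rw [hco, hJsym, hJJ, hQinner, hPa _ (s i).2]
    have hSinner : ⟪((s i : S) : H), ((s j : S) : H)⟫_ℂ = ⟪s i, s j⟫_ℂ := rfl
    rw [hSinner]
    rw [← orthonormal_iff_ite.1 s.orthonormal i j]
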